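/- Let H ∈ ℝ^{m×n} have SVD H = U diag(σ₁,…,σ_p) Vᵀ with p = min(m,n), and let τ > 0. Then the matrix X* = U diag(max(σ_i − τ, 0)) Vᵀ is a global minimizer of f(X) = ‖X‖_* + (1/(2τ))‖X − H‖_F², where ‖X‖_* denotes the matrix nuclear norm. -/

import Mathlib

open Matrix

/-- The nuclear norm of a real matrix: the trace of √(Aᵀ A). -/
noncomputable def nucNorm {m n : ℕ} (A : Matrix (Fin m) (Fin n) ℝ) : ℝ :=
  ((Matrix.posSemidef_conjTranspose_mul_self A).1.eigenvectorUnitary.1 *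
    diagonal ((RCLike.ofReal : ℝ → ℝ) ∘ (√·) ∘ (Matrix.posSemidef_conjTranspose_mul_self A).1.eigenvalues) *
    (star (Matrix.posSemidef_conjTranspose_mul_self A).1.eigenvectorUnitary : Matrix (Fin n) (Fin n) ℝ)).trace

/-- The squared Frobenius norm of a real matrix. -/
def frobSq {m n : ℕ} (A : Matrix (Fin m) (Fin n) ℝ) : ℝ :=
  ∑ i, ∑ j, (A i j) ^ 2

namespace SVTAux

variable {m n : ℕ}

lemma ct (A : Matrix (Fin m) (Fin n) ℝ) : Aᴴ = Aᵀ :=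
  Matrix.conjTranspose_eq_transpose_of_trivial A

lemma psd_diag_nonneg {P : Matrix (Fin n) (Fin n) ℝ} (hP : P.PosSemidef) (j : Fin n) :
    0 ≤ P j j := by
  exact hP.diag_nonneg

lemma nucNorm_eq_sum_sqrt (X : Matrix (Fin m) (Fin n) ℝ) :
    nucNorm X
      = ∑ j, Real.sqrt ((Matrix.posSemidef_conjTranspose_mul_self X).1.eigenvalues j) := by
  rw [nucNorm, Matrix.trace_mul_cycle]
  rw [mul_assoc, ← Matrix.mul_assoc, Unitary.coe_star_mul_self, one_mul, Matrix.trace_diagonal]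
  simp

/-- The key dual inequality: if `1 - GᵀG` is PSD then `tr(GᵀX) ≤ ‖X‖_*`. -/
lemma trace_le_nucNorm (G X : Matrix (Fin m) (Fin n) ℝ)
    (hG : (1 - Gᵀ * G).PosSemidef) :
    (Gᵀ * X).trace ≤ nucNorm X := by
  classical
  set h := Matrix.posSemidef_conjTranspose_mul_self X with hh
  set W : Matrix (Fin n) (Fin n) ℝ := (h.1.eigenvectorUnitary : Matrix (Fin n) (Fin n) ℝ) with hWdef
  have hsWW : star W * W = 1 := Unitary.coe_star_mul_self _
  have hWsW : W * star W = 1 := Unitary.coe_mul_star_self _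
  have hdiag : star W * (Xᴴ * X) * W = diagonal (RCLike.ofReal ∘ h.1.eigenvalues) :=
    by
      have := h.1.conjStarAlgAut_star_eigenvectorUnitary
      simp only [Unitary.conjStarAlgAut_apply, Unitary.coe_star, star_star] at this
      exact this
  have hWsW' : W * Wᴴ = 1 := by rw [← Matrix.star_eq_conjTranspose]; exact hWsW
  have htr : (Gᵀ * X).trace = ((G * W)ᴴ * (X * W)).trace := by
    have e1 : (G * W)ᴴ * (X * W) = Wᴴ * (Gᵀ * X) * W := by
      simp [Matrix.conjTranspose_mul, ct, Matrix.mul_assoc]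
    rw [e1, Matrix.trace_mul_cycle, ← Matrix.mul_assoc, hWsW', Matrix.one_mul]
  have hbound : ∀ j, ((G * W)ᴴ * (X * W)) j j ≤ Real.sqrt (h.1.eigenvalues j) := by
    intro j
    have hlam : 0 ≤ h.1.eigenvalues j := h.eigenvalues_nonneg j
    have ha : ((G * W)ᴴ * (G * W)) j j ≤ 1 := by
      have hpsd : (Wᴴ * (1 - Gᵀ * G) * W).PosSemidef := hG.conjTranspose_mul_mul_same W
      have h0 := psd_diag_nonneg hpsd j
      have hexp : Wᴴ * (1 - Gᵀ * G) * W = 1 - (G * W)ᴴ * (G * W) := by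
        rw [Matrix.star_eq_conjTranspose] at hsWW
        rw [Matrix.mul_sub, Matrix.sub_mul, Matrix.mul_one, hsWW]
        simp [Matrix.conjTranspose_mul, ct, Matrix.mul_assoc]
      rw [hexp] at h0
      have := h0
      simpa [Matrix.sub_apply, Matrix.one_apply] using this
    have hb : ((X * W)ᴴ * (X * W)) j j = h.1.eigenvalues j := by
      have hexp : (X * W)ᴴ * (X * W) = star W * (Xᴴ * X) * W := by
        simp [Matrix.conjTranspose_mul, Matrix.star_eq_conjTranspose, ct, Matrix.mul_assoc]
      rw [hexp, hdiag]
      simp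
    have hcs : (∑ i, (G * W) i j * (X * W) i j) ^ 2 ≤
        (∑ i, (G * W) i j ^ 2) * (∑ i, (X * W) i j ^ 2) :=
      Finset.sum_mul_sq_le_sq_mul_sq Finset.univ _ _
    have ha' : (∑ i, (G * W) i j ^ 2) ≤ 1 := by
      have : ((G * W)ᴴ * (G * W)) j j = ∑ i, (G * W) i j ^ 2 := by
        simp [Matrix.mul_apply, ct, pow_two, mul_comm]
      linarith [ha, this.symm.le]
    have hb' : (∑ i, (X * W) i j ^ 2) = h.1.eigenvalues j := by
      rw [← hb]; simp [Matrix.mul_apply, ct, pow_two, mul_comm]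
    have hc : ((G * W)ᴴ * (X * W)) j j = ∑ i, (G * W) i j * (X * W) i j := by
      simp [Matrix.mul_apply, ct, mul_comm]
    rw [hc]
    have hnn : (0:ℝ) ≤ ∑ i, (X * W) i j ^ 2 := Finset.sum_nonneg fun i _ => sq_nonneg _
    calc ∑ i, (G * W) i j * (X * W) i j
        ≤ Real.sqrt ((∑ i, (G * W) i j * (X * W) i j) ^ 2) := by
          rw [Real.sqrt_sq_eq_abs]; exact le_abs_self _
      _ ≤ Real.sqrt ((∑ i, (G * W) i j ^ 2) * (∑ i, (X * W) i j ^ 2)) := Real.sqrt_le_sqrt hcs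
      _ ≤ Real.sqrt (1 * h.1.eigenvalues j) := by
          apply Real.sqrt_le_sqrt
          rw [hb']
          exact mul_le_mul_of_nonneg_right ha' hlam
      _ = Real.sqrt (h.1.eigenvalues j) := by rw [one_mul]
  rw [htr, nucNorm_eq_sum_sqrt, Matrix.trace]
  exact Finset.sum_le_sum fun j _ => hbound j

lemma rectDiag_transpose_mul (A B : Matrix (Fin m) (Fin n) ℝ)
    (hA : ∀ (i : Fin m) (j : Fin n), (i:ℕ) ≠ (j:ℕ) → A i j = 0)
    (hB : ∀ (i : Fin m) (j : Fin n), (i:ℕ) ≠ (j:ℕ) → B i j = 0) :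
    Aᵀ * B = Matrix.diagonal
      (fun (j : Fin n) => if h : (j:ℕ) < m then A ⟨(j:ℕ),h⟩ j * B ⟨(j:ℕ),h⟩ j else 0) := by
  ext j k
  rw [Matrix.mul_apply]
  by_cases hjk : j = k
  · subst hjk
    simp only [Matrix.diagonal_apply_eq]
    split_ifs with h
    · rw [Finset.sum_eq_single (⟨(j:ℕ),h⟩ : Fin m)]
      · simp
      · intro i _ hi
        have hv : (i:ℕ) ≠ (j:ℕ) := fun hvv => hi (Fin.ext hvv)
        simp [Matrix.transpose_apply, hA i j hv]
      · simp
    · apply Finset.sum_eq_zero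
      intro i _
      have hv : (i:ℕ) ≠ (j:ℕ) := by have := i.isLt; omega
      simp [Matrix.transpose_apply, hA i j hv]
  · simp only [Matrix.diagonal_apply_ne _ hjk]
    apply Finset.sum_eq_zero
    intro i _
    by_cases hv : (i:ℕ) = (j:ℕ)
    · have hv2 : (i:ℕ) ≠ (k:ℕ) := by
        intro hvv; exact hjk (Fin.ext (hv.symm.trans hvv))
      simp [Matrix.transpose_apply, hB i k hv2]
    · simp [Matrix.transpose_apply, hA i j hv]

lemma mul_cancel_left {k l : ℕ} {P Q : Matrix (Fin k) (Fin k) ℝ} (hPQ : P * Q = 1)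
    (A : Matrix (Fin k) (Fin l) ℝ) : P * (Q * A) = A := by
  rw [← Matrix.mul_assoc, hPQ, Matrix.one_mul]

lemma inner_trace (A B : Matrix (Fin m) (Fin n) ℝ) :
    (Aᵀ * B).trace = ∑ i, ∑ j, A i j * B i j := by
  rw [Matrix.trace, Finset.sum_comm]
  simp [Matrix.diag, Matrix.mul_apply, Matrix.transpose_apply]

end SVTAux

open SVTAux in
theorem stmt_5 (m n : ℕ) (τ : ℝ) (hτ : 0 < τ)
    (H D : Matrix (Fin m) (Fin n) ℝ)
    (U : Matrix (Fin m) (Fin m) ℝ) (V : Matrix (Fin n) (Fin n) ℝ)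
    (hU : Uᵀ * U = 1) (hV : Vᵀ * V = 1)
    (hDdiag : ∀ (i : Fin m) (j : Fin n), (i : ℕ) ≠ (j : ℕ) → D i j = 0)
    (hDpos : ∀ i j, 0 ≤ D i j)
    (hH : H = U * D * Vᵀ)
    (Xs : Matrix (Fin m) (Fin n) ℝ)
    (hXs : Xs = U * (Matrix.of fun i j => max (D i j - τ) 0) * Vᵀ) :
    ∀ X : Matrix (Fin m) (Fin n) ℝ,
      nucNorm Xs + 1 / (2 * τ) * frobSq (Xs - H) ≤
        nucNorm X + 1 / (2 * τ) * frobSq (X - H) := by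
  intro X
  classical
  set S : Matrix (Fin m) (Fin n) ℝ := Matrix.of fun i j => max (D i j - τ) 0 with hSdef
  set E : Matrix (Fin m) (Fin n) ℝ := Matrix.of fun i j => (D i j - S i j) / τ with hEdef
  set G : Matrix (Fin m) (Fin n) ℝ := U * E * Vᵀ with hGdef
  have hVV' : V * Vᵀ = 1 := mul_eq_one_comm.mp hV
  have hSval : ∀ (i : Fin m) (j : Fin n), S i j = max (D i j - τ) 0 := fun i j => rfl
  have hEval : ∀ (i : Fin m) (j : Fin n), E i j = (D i j - S i j) / τ := fun i j => rfl
  have hSdiag : ∀ (i : Fin m) (j : Fin n), (i:ℕ) ≠ (j:ℕ) → S i j = 0 := by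
    intro i j hij
    rw [hSval, hDdiag i j hij]
    simp [le_of_lt hτ]
  have hEdiag : ∀ (i : Fin m) (j : Fin n), (i:ℕ) ≠ (j:ℕ) → E i j = 0 := by
    intro i j hij
    rw [hEval, hSdiag i j hij, hDdiag i j hij]
    simp
  have hSnn : ∀ i j, 0 ≤ S i j := fun i j => le_max_right _ _
  have hEnn : ∀ i j, 0 ≤ E i j := by
    intro i j
    rw [hEval]
    apply div_nonneg _ hτ.le
    rw [hSval, sub_nonneg]
    exact max_le (by linarith [hτ]) (hDpos i j)
  have hEle : ∀ i j, E i j ≤ 1 := by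
    intro i j
    rw [hEval, div_le_one hτ, hSval]
    rcases le_or_gt (D i j - τ) 0 with hc | hc
    · rw [max_eq_right hc]; linarith
    · rw [max_eq_left hc.le]; linarith
  have hES : ∀ i j, E i j * S i j = S i j := by
    intro i j
    rcases le_or_gt (D i j - τ) 0 with hc | hc
    · rw [hSval, max_eq_right hc, mul_zero]
    · have hs : S i j = D i j - τ := by rw [hSval, max_eq_left hc.le]
      rw [hEval, hs]
      field_simp
      ring
  -- diagonal entry functions
  set t : Fin n → ℝ := fun j => if h : (j:ℕ) < m then S ⟨(j:ℕ),h⟩ j else 0 with htdef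
  have htnn : ∀ j, 0 ≤ t j := by
    intro j; rw [htdef]; dsimp only; split_ifs with h
    · exact hSnn _ _
    · exact le_refl 0
  -- products of rectangular diagonals
  have hSS : Sᵀ * S = Matrix.diagonal (fun j => t j * t j) := by
    rw [rectDiag_transpose_mul S S hSdiag hSdiag]
    apply congrArg Matrix.diagonal
    funext j
    rw [htdef]
    by_cases h : (j:ℕ) < m
    · simp [h]
    · simp [h]
  have hESd : Eᵀ * S = Matrix.diagonal t := by
    rw [rectDiag_transpose_mul E S hEdiag hSdiag]
    apply congrArg Matrix.diagonal
    funext j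
    rw [htdef]
    by_cases h : (j:ℕ) < m
    · simp [h, hES]
    · simp [h]
  set ee : Fin n → ℝ := fun j => if h : (j:ℕ) < m then E ⟨(j:ℕ),h⟩ j * E ⟨(j:ℕ),h⟩ j else 0
    with heedef
  have hEE : Eᵀ * E = Matrix.diagonal ee := by
    rw [rectDiag_transpose_mul E E hEdiag hEdiag]
  have hee01 : ∀ j, 0 ≤ 1 - ee j := by
    intro j; rw [heedef]; dsimp only; split_ifs with h
    · nlinarith [hEnn ⟨(j:ℕ),h⟩ j, hEle ⟨(j:ℕ),h⟩ j]
    · norm_num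
  -- Xs in terms of S
  have hXs' : Xs = U * (S * Vᵀ) := by rw [hXs, Matrix.mul_assoc]
  -- nucNorm Xs = ∑ t
  set T : Matrix (Fin n) (Fin n) ℝ := Matrix.diagonal t with hTdef
  have hTpsd : T.PosSemidef := Matrix.posSemidef_diagonal_iff.mpr htnn
  have hQpsd : (V * T * Vᵀ).PosSemidef := by
    have := hTpsd.mul_mul_conjTranspose_same V
    rwa [ct] at this
  have hsq : (V * T * Vᵀ) ^ 2 = Xsᴴ * Xs := by
    rw [pow_two, ct, hXs']
    simp only [Matrix.transpose_mul, Matrix.transpose_transpose, Matrix.mul_assoc]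
    rw [mul_cancel_left hV, mul_cancel_left hU]
    rw [← Matrix.mul_assoc T T, ← Matrix.mul_assoc Sᵀ S, hSS, hTdef,
      Matrix.diagonal_mul_diagonal]
  have hXsnuc : nucNorm Xs = ∑ j, t j := by
    open scoped MatrixOrder in
    have heq : V * T * Vᵀ = CFC.sqrt (Xsᴴ * Xs) :=
      (CFC.sqrt_unique (by rw [← pow_two]; exact hsq) hQpsd.nonneg).symm
    open scoped MatrixOrder in
    have key : nucNorm Xs = (CFC.sqrt (Xsᴴ * Xs)).trace := by
      rw [nucNorm, CFC.sqrt_eq_real_sqrt _ (Matrix.posSemidef_conjTranspose_mul_self Xs).nonneg,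
        cfcₙ_eq_cfc, (Matrix.posSemidef_conjTranspose_mul_self Xs).1.cfc_eq]
      rfl
    rw [key, ← heq, Matrix.trace_mul_cycle, hV, Matrix.one_mul, hTdef,
      Matrix.trace_diagonal]
  -- trace (Gᵀ * Xs) = ∑ t
  have hGXs : (Gᵀ * Xs).trace = ∑ j, t j := by
    rw [hGdef, hXs']
    simp only [Matrix.transpose_mul, Matrix.transpose_transpose, Matrix.mul_assoc]
    rw [mul_cancel_left hU, ← Matrix.mul_assoc Eᵀ S, hESd]
    rw [← Matrix.mul_assoc, Matrix.trace_mul_cycle, hV, Matrix.one_mul,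
      Matrix.trace_diagonal]
  -- PSD of 1 - GᵀG
  have hGpsd : (1 - Gᵀ * G).PosSemidef := by
    have hGG : Gᵀ * G = V * Matrix.diagonal ee * Vᵀ := by
      rw [hGdef]
      simp only [Matrix.transpose_mul, Matrix.transpose_transpose, Matrix.mul_assoc]
      rw [mul_cancel_left hU, ← Matrix.mul_assoc Eᵀ E, hEE, ← Matrix.mul_assoc]
    have hone : (1 : Matrix (Fin n) (Fin n) ℝ) - Gᵀ * G
        = V * Matrix.diagonal (fun j => 1 - ee j) * Vᵀ := by
      rw [hGG]
      have : Matrix.diagonal (fun j => 1 - ee j)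
          = 1 - Matrix.diagonal ee := by
        rw [← Matrix.diagonal_one, Matrix.diagonal_sub]
      rw [this, Matrix.mul_sub, Matrix.sub_mul, Matrix.mul_one, hVV']
    rw [hone]
    have := (Matrix.posSemidef_diagonal_iff.mpr hee01).mul_mul_conjTranspose_same V
    rwa [ct] at this
  have hGX := trace_le_nucNorm G X hGpsd
  -- H - Xs = τ • G
  have hHXs : Xs - H = (-τ) • G := by
    rw [hXs', hH, hGdef]
    have hDS : S - D = (-τ) • E := by
      ext i j
      rw [Matrix.sub_apply, Matrix.smul_apply, hEval, smul_eq_mul]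
      field_simp
      ring
    calc U * (S * Vᵀ) - U * D * Vᵀ = U * ((S - D) * Vᵀ) := by
          rw [Matrix.sub_mul, Matrix.mul_sub, Matrix.mul_assoc]
      _ = U * (((-τ) • E) * Vᵀ) := by rw [hDS]
      _ = (-τ) • (U * E * Vᵀ) := by
          rw [Matrix.smul_mul, Matrix.mul_smul, ← Matrix.mul_assoc]
  -- Frobenius expansion
  set I : ℝ := ∑ i, ∑ j, (X - Xs) i j * (Xs - H) i j with hIdef
  have hsplit : frobSq (X - H) = frobSq (X - Xs) + 2 * I + frobSq (Xs - H) := by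
    have hdec : X - H = (X - Xs) + (Xs - H) := by abel
    rw [hdec, hIdef]
    simp only [frobSq, Matrix.add_apply]
    have hpt : ∀ (i : Fin m) (j : Fin n),
        ((X - Xs) i j + (Xs - H) i j) ^ 2
          = (X - Xs) i j ^ 2 + 2 * ((X - Xs) i j * (Xs - H) i j) + (Xs - H) i j ^ 2 := by
      intro i j; ring
    simp_rw [hpt, Finset.sum_add_distrib, Finset.mul_sum]
  have hI : I = -τ * ((Gᵀ * X).trace - (Gᵀ * Xs).trace) := by
    rw [hIdef, ← inner_trace, hHXs, Matrix.mul_smul, Matrix.trace_smul, smul_eq_mul]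
    congr 1
    rw [← Matrix.trace_transpose ((X - Xs)ᵀ * G), Matrix.transpose_mul,
      Matrix.transpose_transpose, Matrix.mul_sub, Matrix.trace_sub]
  -- final arithmetic
  have hfnn : 0 ≤ frobSq (X - Xs) := by
    apply Finset.sum_nonneg; intro i _; apply Finset.sum_nonneg; intro j _; exact sq_nonneg _
  rw [hsplit, hI, hGXs, hXsnuc]
  have hexpand : 1 / (2 * τ) * (frobSq (X - Xs)
        + 2 * (-τ * ((Gᵀ * X).trace - ∑ j, t j)) + frobSq (Xs - H))
      = 1 / (2 * τ) * frobSq (X - Xs) - ((Gᵀ * X).trace - ∑ j, t j)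
        + 1 / (2 * τ) * frobSq (Xs - H) := by
    field_simp
    ring
  rw [hexpand]
  have hc : 0 ≤ 1 / (2 * τ) * frobSq (X - Xs) :=
    mul_nonneg (by positivity) hfnn
  linarith [hGX]
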